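/- Define f ⊗̂ g(x) := f(1 − g(x)) for trade-off functions f, g. If f and g are trade-off functions, then f ⊗̂ g is a trade-off function, and (f ⊗̂ g)⁻¹ = (g⁻¹) ⊗̂ (f⁻¹). -/
import Mathlib


open Set

/-- The left-continuous inverse `f⁻¹(α) = inf{t ∈ [0,1] : f(t) ≤ α}`. -/
noncomputable def tfInv (f : ℝ → ℝ) (α : ℝ) : ℝ :=
  sInf {t : ℝ | t ∈ Icc (0:ℝ) 1 ∧ f t ≤ α}

lemma tfInv_mem (f : ℝ → ℝ) (hfcont : ContinuousOn f (Icc (0:ℝ) 1))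
    (hfle : ∀ x ∈ Icc (0:ℝ) 1, f x ≤ 1 - x) {α : ℝ} (hα : 0 ≤ α) :
    tfInv f α ∈ Icc (0:ℝ) 1 ∧ f (tfInv f α) ≤ α := by
  have hset : {t : ℝ | t ∈ Icc (0:ℝ) 1 ∧ f t ≤ α} = Icc (0:ℝ) 1 ∩ f ⁻¹' (Iic α) := by
    ext t; simp [Set.mem_setOf_eq, Set.mem_inter_iff]
  have hclosed : IsClosed {t : ℝ | t ∈ Icc (0:ℝ) 1 ∧ f t ≤ α} := by
    rw [hset]
    exact hfcont.preimage_isClosed_of_isClosed isClosed_Icc isClosed_Iic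
  have hne : ({t : ℝ | t ∈ Icc (0:ℝ) 1 ∧ f t ≤ α}).Nonempty := by
    refine ⟨1, ⟨by norm_num, ?_⟩⟩
    have := hfle 1 (by norm_num)
    linarith
  have hbdd : BddBelow {t : ℝ | t ∈ Icc (0:ℝ) 1 ∧ f t ≤ α} :=
    ⟨0, fun t ht => ht.1.1⟩
  have := hclosed.csInf_mem hne hbdd
  exact ⟨this.1, this.2⟩

lemma tfInv_le (f : ℝ → ℝ) {α t : ℝ} (ht : t ∈ Icc (0:ℝ) 1) (hft : f t ≤ α) :
    tfInv f α ≤ t :=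
  csInf_le ⟨0, fun s hs => hs.1.1⟩ ⟨ht, hft⟩

theorem statement12 (f g : ℝ → ℝ)
    (hfconv : ConvexOn ℝ (Icc (0:ℝ) 1) f) (hfcont : ContinuousOn f (Icc (0:ℝ) 1))
    (hfanti : AntitoneOn f (Icc (0:ℝ) 1)) (hfle : ∀ x ∈ Icc (0:ℝ) 1, f x ≤ 1 - x)
    (hfnn : ∀ x ∈ Icc (0:ℝ) 1, 0 ≤ f x)
    (hgconv : ConvexOn ℝ (Icc (0:ℝ) 1) g) (hgcont : ContinuousOn g (Icc (0:ℝ) 1))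
    (hganti : AntitoneOn g (Icc (0:ℝ) 1)) (hgle : ∀ x ∈ Icc (0:ℝ) 1, g x ≤ 1 - x)
    (hgnn : ∀ x ∈ Icc (0:ℝ) 1, 0 ≤ g x) :
    (ConvexOn ℝ (Icc (0:ℝ) 1) (fun x => f (1 - g x)) ∧
      ContinuousOn (fun x => f (1 - g x)) (Icc (0:ℝ) 1) ∧
      AntitoneOn (fun x => f (1 - g x)) (Icc (0:ℝ) 1) ∧
      (∀ x ∈ Icc (0:ℝ) 1, f (1 - g x) ≤ 1 - x) ∧
      (∀ x ∈ Icc (0:ℝ) 1, 0 ≤ f (1 - g x))) ∧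
    (∀ α ∈ Icc (0:ℝ) 1,
      tfInv (fun x => f (1 - g x)) α = tfInv g (1 - tfInv f α)) := by
  -- 1 - g maps [0,1] into [0,1]
  have hmem : ∀ x ∈ Icc (0:ℝ) 1, (1 - g x) ∈ Icc (0:ℝ) 1 := by
    intro x hx
    have h1 := hgle x hx
    have h2 := hgnn x hx
    constructor
    · linarith [hx.1]
    · linarith
  -- convexity
  have hconv : ConvexOn ℝ (Icc (0:ℝ) 1) (fun x => f (1 - g x)) := by
    refine ⟨convex_Icc 0 1, ?_⟩
    intro x hx y hy a b ha hb hab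
    have hxy : a • x + b • y ∈ Icc (0:ℝ) 1 := (convex_Icc 0 1) hx hy ha hb hab
    have hcomb : a • (1 - g x) + b • (1 - g y) ∈ Icc (0:ℝ) 1 :=
      (convex_Icc 0 1) (hmem x hx) (hmem y hy) ha hb hab
    have hgc : g (a • x + b • y) ≤ a • g x + b • g y := hgconv.2 hx hy ha hb hab
    have hle1 : a • (1 - g x) + b • (1 - g y) ≤ 1 - g (a • x + b • y) := by
      simp only [smul_eq_mul] at *; nlinarith
    calc f (1 - g (a • x + b • y)) ≤ f (a • (1 - g x) + b • (1 - g y)) :=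
            hfanti hcomb (hmem _ hxy) hle1
      _ ≤ a • f (1 - g x) + b • f (1 - g y) :=
            hfconv.2 (hmem x hx) (hmem y hy) ha hb hab
  -- continuity
  have hcont : ContinuousOn (fun x => f (1 - g x)) (Icc (0:ℝ) 1) := by
    apply hfcont.comp ((continuousOn_const.sub hgcont))
    exact fun x hx => hmem x hx
  -- antitone
  have hanti : AntitoneOn (fun x => f (1 - g x)) (Icc (0:ℝ) 1) := by
    intro x hx y hy hxy
    exact hfanti (hmem x hx) (hmem y hy) (by linarith [hganti hx hy hxy])
  -- bound
  have hle : ∀ x ∈ Icc (0:ℝ) 1, f (1 - g x) ≤ 1 - x := by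
    intro x hx
    have h1 : x ≤ 1 - g x := by linarith [hgnn x hx, hgle x hx]
    calc f (1 - g x) ≤ f x := hfanti hx (hmem x hx) h1
      _ ≤ 1 - x := hfle x hx
  have hnn : ∀ x ∈ Icc (0:ℝ) 1, 0 ≤ f (1 - g x) := fun x hx => hfnn _ (hmem x hx)
  refine ⟨⟨hconv, hcont, hanti, hle, hnn⟩, ?_⟩
  intro α hα
  set F := tfInv f α with hF
  obtain ⟨hFmem, hfF⟩ := tfInv_mem f hfcont hfle hα.1
  have h1F : (0:ℝ) ≤ 1 - F := by linarith [hFmem.2]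
  set G := tfInv g (1 - F) with hG
  obtain ⟨hGmem, hgG⟩ := tfInv_mem g hgcont hgle h1F
  -- key: for t ∈ [0,1] with t < F, α < f t
  have hkey : ∀ t ∈ Icc (0:ℝ) 1, f t ≤ α → F ≤ t := fun t ht h => tfInv_le f ht h
  apply le_antisymm
  · -- tfInv h α ≤ G since f (1 - g G) ≤ α
    apply tfInv_le _ hGmem
    have h1 : F ≤ 1 - g G := by linarith
    calc f (1 - g G) ≤ f F := hfanti hFmem (hmem G hGmem) h1
      _ ≤ α := hfF
  · -- G ≤ tfInv h α
    obtain ⟨hTmem, hfT⟩ := tfInv_mem (fun x => f (1 - g x)) hcont hle hα.1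
    set T := tfInv (fun x => f (1 - g x)) α with hT
    apply tfInv_le _ hTmem
    -- need g T ≤ 1 - F, i.e. F ≤ 1 - g T
    have : F ≤ 1 - g T := hkey _ (hmem T hTmem) hfT
    linarith
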